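/- Let n ≥ 2 and let x ∈ ℝ^{n-1} satisfy x_i > 0 for all i and x_n := 1 − Σ_{i=1}^{n-1} x_i > 0. Let D(x) be the (n−1)×(n−1) matrix with entries D_{kl}(x) = x_k(δ_{kl} − x_l). Then D(x) is invertible, and for every v ∈ ℝ^{n-1}, vᵀ D(x)^{-1} v = Σ_{i=1}^{n-1} v_i²/x_i + (Σ_{i=1}^{n-1} v_i)²/x_n. -/

import Mathlib

open Matrix
open scoped Classical

/-- The Wright–Fisher diffusion matrix `D(x)_{kl} = x_k (δ_{kl} - x_l)`. -/
noncomputable def WFmatrix (n : ℕ) (x : Fin (n - 1) → ℝ) :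
    Matrix (Fin (n - 1)) (Fin (n - 1)) ℝ :=
  Matrix.of fun k l => x k * ((if k = l then (1:ℝ) else 0) - x l)

/-- if `xᵢ > 0` for all `i` and `x_n = 1 - ∑ xᵢ > 0`, then `D(x)` is
invertible and `vᵀ D(x)⁻¹ v = ∑ᵢ vᵢ²/xᵢ + (∑ᵢ vᵢ)²/x_n` for every `v ∈ ℝ^{n-1}`. -/
theorem WFmatrix_inv_quadForm (n : ℕ) (hn : 2 ≤ n) (x : Fin (n - 1) → ℝ)
    (hx : ∀ i, 0 < x i) (hxn : 0 < 1 - ∑ i, x i) :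
    IsUnit (WFmatrix n x) ∧
      ∀ v : Fin (n - 1) → ℝ,
        v ⬝ᵥ ((WFmatrix n x)⁻¹ *ᵥ v) =
          (∑ i, v i ^ 2 / x i) + (∑ i, v i) ^ 2 / (1 - ∑ i, x i) := by
  set s : ℝ := 1 - ∑ i, x i with hs
  have hs0 : s ≠ 0 := ne_of_gt hxn
  have hxne : ∀ i, x i ≠ 0 := fun i => ne_of_gt (hx i)
  set B : Matrix (Fin (n - 1)) (Fin (n - 1)) ℝ :=
    Matrix.of (fun k l => (if k = l then 1 / x k else 0) + 1 / s) with hB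
  have hAB : WFmatrix n x * B = 1 := by
    ext k m
    simp only [Matrix.mul_apply, WFmatrix, B, Matrix.of_apply, Matrix.one_apply]
    have : ∀ l, x k * ((if k = l then (1:ℝ) else 0) - x l) *
        ((if l = m then 1 / x l else 0) + 1 / s)
        = (if l = m then x k * ((if k = l then (1:ℝ) else 0) - x l) / x l else 0)
          + x k * ((if k = l then (1:ℝ) else 0) - x l) / s := by
      intro l
      by_cases h : l = m <;> simp [h] <;> ring
    rw [Finset.sum_congr rfl fun l _ => this l, Finset.sum_add_distrib]
    rw [Finset.sum_ite_eq' Finset.univ m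
      (fun l => x k * ((if k = l then (1:ℝ) else 0) - x l) / x l)]
    simp only [Finset.mem_univ, if_true]
    have h2 : ∑ l, x k * ((if k = l then (1:ℝ) else 0) - x l) / s
        = x k * (1 - ∑ l, x l) / s := by
      rw [← Finset.sum_div, ← Finset.mul_sum, Finset.sum_sub_distrib]
      simp [Finset.sum_ite_eq Finset.univ k (fun _ => (1:ℝ))]
    rw [h2, ← hs]
    by_cases hkm : k = m
    · subst hkm
      field_simp [hxne k]
      simp
    · simp only [hkm, if_false]
      field_simp [hxne m]
      ring
  have hinv : (WFmatrix n x)⁻¹ = B := inv_eq_right_inv hAB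
  have hunit : IsUnit (WFmatrix n x) := by
    have := invertibleOfRightInverse _ _ hAB
    exact isUnit_of_invertible _
  refine ⟨hunit, fun v => ?_⟩
  rw [hinv]
  simp only [dotProduct, Matrix.mulVec, dotProduct, B, Matrix.of_apply]
  have : ∀ k, v k * (∑ l, ((if k = l then 1 / x k else 0) + 1 / s) * v l)
      = v k ^ 2 / x k + v k * (∑ l, v l) / s := by
    intro k
    simp only [add_mul, ite_mul, zero_mul]
    rw [Finset.sum_add_distrib]
    rw [Finset.sum_ite_eq Finset.univ k (fun l => 1 / x k * v l)]
    simp only [Finset.mem_univ, if_true]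
    rw [show ∑ l, 1 / s * v l = (∑ l, v l) / s by rw [← Finset.mul_sum]; ring]
    field_simp
  rw [Finset.sum_congr rfl fun k _ => this k, Finset.sum_add_distrib]
  congr 1
  rw [← Finset.sum_div, ← Finset.sum_mul]
  ring
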